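/- Let Â^(1),...,Â^(R) be L×L nonnegative matrices whose average is row-wise strictly diagonally dominant, and let P, Q be column-stochastic L×L matrices. If Â^(r)P = Â^(r)Q for all r and trace of the average of Â^(r)P equals trace of the average of the Â^(r), then P = Q = I. -/
import Mathlib

lemma trace_eq_case {L : ℕ} (A P : Matrix (Fin L) (Fin L) ℝ)
    (hDD : ∀ i j, j ≠ i → A i j < A i i)
    (hPnn : ∀ i j, 0 ≤ P i j) (hPs : ∀ i, ∑ j, P j i = 1)
    (hTr : Matrix.trace (A * P) = Matrix.trace A) : P = 1 := by
  have hle : ∀ i j : Fin L, A i j * P j i ≤ A i i * P j i := by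
    intro i j
    rcases eq_or_ne j i with rfl | hne
    · exact le_refl _
    · exact mul_le_mul_of_nonneg_right (le_of_lt (hDD i j hne)) (hPnn j i)
  have hsum : ∑ p : Fin L × Fin L, A p.1 p.2 * P p.2 p.1
      = ∑ p : Fin L × Fin L, A p.1 p.1 * P p.2 p.1 := by
    have h1 : ∑ p : Fin L × Fin L, A p.1 p.2 * P p.2 p.1 = Matrix.trace (A * P) := by
      rw [Fintype.sum_prod_type]
      simp [Matrix.trace, Matrix.mul_apply, Matrix.diag]
    have h2 : ∑ p : Fin L × Fin L, A p.1 p.1 * P p.2 p.1 = Matrix.trace A := by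
      rw [Fintype.sum_prod_type]
      simp only [← Finset.mul_sum]
      simp [Matrix.trace, Matrix.diag, hPs]
    rw [h1, h2, hTr]
  have heach : ∀ p : Fin L × Fin L, p ∈ Finset.univ →
      A p.1 p.2 * P p.2 p.1 = A p.1 p.1 * P p.2 p.1 := by
    rw [← Finset.sum_eq_sum_iff_of_le (fun p _ => hle p.1 p.2)]
    exact hsum
  have hoff : ∀ i j : Fin L, j ≠ i → P j i = 0 := by
    intro i j hne
    have h := heach (i, j) (Finset.mem_univ _)
    simp only at h
    by_contra hP0
    have hPpos : 0 < P j i := lt_of_le_of_ne (hPnn j i) (Ne.symm hP0)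
    have := (mul_lt_mul_of_pos_right (hDD i j hne) hPpos)
    linarith
  ext i j
  rcases eq_or_ne i j with rfl | hne
  · have : ∑ k, P k i = 1 := hPs i
    rw [Finset.sum_eq_single i] at this
    · simpa using this
    · intro k _ hk; exact hoff i k hk
    · intro h; exact absurd (Finset.mem_univ i) h
  · simp [Matrix.one_apply, hne, hoff j i hne]

theorem stmt_17 {L R : ℕ} (hR : 0 < R)
    (Ahat : Fin R → Matrix (Fin L) (Fin L) ℝ) (P Q : Matrix (Fin L) (Fin L) ℝ)
    (hAhat : ∀ r i j, 0 ≤ Ahat r i j)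
    (hDD : ∀ i j, j ≠ i →
      ((R : ℝ)⁻¹ • ∑ r, Ahat r) i j < ((R : ℝ)⁻¹ • ∑ r, Ahat r) i i)
    (hPnn : ∀ i j, 0 ≤ P i j) (hPs : ∀ i, ∑ j, P j i = 1)
    (hQnn : ∀ i j, 0 ≤ Q i j) (hQs : ∀ i, ∑ j, Q j i = 1)
    (hPQ : ∀ r, Ahat r * P = Ahat r * Q)
    (hTr : Matrix.trace ((R : ℝ)⁻¹ • ∑ r, (Ahat r * P))
         = Matrix.trace ((R : ℝ)⁻¹ • ∑ r, Ahat r)) :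
    P = 1 ∧ Q = 1 := by
  set A : Matrix (Fin L) (Fin L) ℝ := (R : ℝ)⁻¹ • ∑ r, Ahat r with hA
  have hAP : A * P = (R : ℝ)⁻¹ • ∑ r, (Ahat r * P) := by
    rw [hA, Matrix.smul_mul, Finset.sum_mul]
  have hAQ : A * Q = (R : ℝ)⁻¹ • ∑ r, (Ahat r * Q) := by
    rw [hA, Matrix.smul_mul, Finset.sum_mul]
  have hTrP : Matrix.trace (A * P) = Matrix.trace A := by rw [hAP]; exact hTr
  have hTrQ : Matrix.trace (A * Q) = Matrix.trace A := by
    rw [hAQ]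
    simp only [← hPQ]
    rw [← hAP]; exact hTrP
  exact ⟨trace_eq_case A P hDD hPnn hPs hTrP, trace_eq_case A Q hDD hQnn hQs hTrQ⟩
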